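/- Let P, I be n×n matrices with entries in ℝ ∪ {-∞} such that P_{jj} ≠ -∞ for every index j, and let L ⊆ {p, i}^* be any language. Then G(μ({p} ∪ L)) ∈ Γ if and only if G(μ({p} · L^*)) ∈ Γ. -/

import Mathlib

open scoped Classical

namespace NCP

/-- Square max-plus matrices over the extended reals. -/
abbrev MPMat (n : ℕ) := Fin n → Fin n → EReal

/-- Max-plus matrix product: `(A ⊗ B) i j = ⨆ k, A i k + B k j`. -/
noncomputable def mpMul {n : ℕ} (A B : MPMat n) : MPMat n :=
  fun i j => ⨆ k : Fin n, A i k + B k j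

/-- Max-plus identity matrix `E_⊗`. -/
noncomputable def mpId {n : ℕ} : MPMat n :=
  fun i j => if i = j then 0 else ⊥

/-- Max-plus matrix powers. -/
noncomputable def mpPow {n : ℕ} (A : MPMat n) : ℕ → MPMat n
  | 0 => mpId
  | k + 1 => mpMul A (mpPow A k)

/-- Entrywise Kleene star `(A^*) i j = ⨆ k, (A^k) i j`. -/
noncomputable def mpStar {n : ℕ} (A : MPMat n) : MPMat n :=
  fun i j => ⨆ k : ℕ, mpPow A k i j

/-- Entrywise max of two matrices, `A ⊕ B`. -/
noncomputable def mpAdd {n : ℕ} (A B : MPMat n) : MPMat n :=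
  fun i j => max (A i j) (B i j)

/-- `G(A) ∈ Γ`: all diagonal entries of all positive powers are ≤ 0. -/
def InGamma {n : ℕ} (A : MPMat n) : Prop :=
  ∀ i : Fin n, ∀ k : ℕ, 1 ≤ k → mpPow A k i i ≤ 0

/-- `λA`: the matrix with entries `λ + A i j`. -/
noncomputable def sm {n : ℕ} (lam : ℝ) (A : MPMat n) : MPMat n :=
  fun i j => (lam : EReal) + A i j

/-- Division of an extended real by a natural number (±∞ map to ±∞). -/
noncomputable def edivNat (x : EReal) (k : ℕ) : EReal :=
  if x = ⊤ then ⊤ else if x = ⊥ then ⊥ else ((x.toReal / k : ℝ) : EReal)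

/-- The maximum circuit mean of a max-plus matrix. -/
noncomputable def mcm {n : ℕ} (M : MPMat n) : EReal :=
  ⨆ k ∈ Finset.Icc 1 n, ⨆ i : Fin n, edivNat (mpPow M k i i) k

/-- Morphism from words to max-plus matrices determined by `f` on letters. -/
noncomputable def wordMat {α : Type*} {n : ℕ} (f : α → MPMat n) : List α → MPMat n
  | [] => mpId
  | z :: s => mpMul (f z) (wordMat f s)

/-- Entrywise extension of `wordMat` to languages: `μ(L) i j = ⨆ s ∈ L, μ(s) i j`. -/
noncomputable def langMat {α : Type*} {n : ℕ} (f : α → MPMat n) (L : Language α) : MPMat n :=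
  fun i j => ⨆ s ∈ L, wordMat f s i j

/-- The recursive sequence of languages `S(L₁, L₂, k)`. -/
def SL {α : Type*} (L1 L2 : Language α) : ℕ → Language α
  | 0 => 1
  | k + 1 => L1 * SL L1 L2 k * SL L1 L2 k * L2 + L2 * SL L1 L2 k * SL L1 L2 k * L1 + 1


/-- The morphism on the two-letter alphabet `{p, i}` (encoded as `{true, false}`)
sending `p` to `P` and `i` to `I`. -/
noncomputable def mu2 {n : ℕ} (P I : MPMat n) : Bool → MPMat n :=
  fun z => if z then P else I

-- auxiliary EReal lemmas

lemma ereal_cancel (a : ℝ) (x : EReal) : (↑(-a) : EReal) + (↑a + x) = x := by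
  induction x using EReal.rec with
  | bot => rw [EReal.add_bot, EReal.add_bot]
  | top => rw [EReal.coe_add_top, EReal.coe_add_top]
  | coe b => rw [← EReal.coe_add, ← EReal.coe_add]; norm_num

lemma ereal_add_iSup {ι : Sort*} (a : EReal) (f : ι → EReal) :
    a + ⨆ i, f i = ⨆ i, a + f i := by
  refine le_antisymm ?_ (iSup_le fun i => add_le_add_right (le_iSup f i) a)
  induction a using EReal.rec with
  | bot => simp [EReal.bot_add]
  | top =>
    rcases eq_or_ne (⨆ i, f i) ⊥ with h | h
    · rw [h, EReal.add_bot]; exact bot_le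
    · obtain ⟨i, hi⟩ := lt_iSup_iff.mp (bot_lt_iff_ne_bot.mpr h)
      rw [EReal.top_add_of_ne_bot h]
      refine le_trans ?_ (le_iSup _ i)
      rw [EReal.top_add_of_ne_bot (ne_of_gt hi)]
  | coe a =>
    have h1 : (⨆ i, f i) ≤ (↑(-a) : EReal) + ⨆ i, (↑a : EReal) + f i := by
      refine iSup_le fun i => ?_
      rw [← ereal_cancel a (f i)]
      exact add_le_add_right (le_iSup (fun i => (↑a : EReal) + f i) i) _
    calc (↑a : EReal) + ⨆ i, f i
        ≤ ↑a + ((↑(-a) : EReal) + ⨆ i, (↑a : EReal) + f i) := add_le_add_right h1 _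
      _ = ⨆ i, (↑a : EReal) + f i := by
          have h2 := ereal_cancel (-a) (⨆ i, (↑a : EReal) + f i)
          rwa [neg_neg] at h2

lemma ereal_iSup_add {ι : Sort*} (a : EReal) (f : ι → EReal) :
    (⨆ i, f i) + a = ⨆ i, f i + a := by
  rw [add_comm, ereal_add_iSup]; simp [add_comm]


variable {n : ℕ} {α : Type*}

lemma mpMul_assoc (A B C : MPMat n) : mpMul (mpMul A B) C = mpMul A (mpMul B C) := by
  funext i j
  simp only [mpMul, ereal_iSup_add, ereal_add_iSup, add_assoc]
  exact iSup_comm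

lemma mpId_mul (A : MPMat n) : mpMul mpId A = A := by
  funext i j
  refine le_antisymm (iSup_le fun k => ?_) (le_iSup_of_le i ?_)
  · by_cases h : i = k
    · subst h; simp [mpId]
    · simp [mpId, h, EReal.bot_add]
  · simp [mpId]

lemma mpMul_id (A : MPMat n) : mpMul A mpId = A := by
  funext i j
  refine le_antisymm (iSup_le fun k => ?_) (le_iSup_of_le j ?_)
  · by_cases h : k = j
    · subst h; simp [mpId]
    · simp [mpId, h, EReal.add_bot]
  · simp [mpId]

lemma wordMat_append (f : α → MPMat n) (s t : List α) :
    wordMat f (s ++ t) = mpMul (wordMat f s) (wordMat f t) := by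
  induction s with
  | nil => simp [wordMat, mpId_mul]
  | cons z s ih => simp [wordMat, ih, mpMul_assoc]

lemma mpMul_diag_le (A B : MPMat n) (i j : Fin n) :
    A i j + B j i ≤ mpMul A B i i :=
  le_iSup (fun k => A i k + B k i) j

lemma wordMat_append_diag (f : α → MPMat n) (s t : List α) (i : Fin n) :
    wordMat f s i i + wordMat f t i i ≤ wordMat f (s ++ t) i i := by
  rw [wordMat_append]; exact mpMul_diag_le _ _ i i

lemma langMat_one (f : α → MPMat n) : langMat f 1 = mpId := by
  funext i j
  refine le_antisymm (iSup₂_le fun s hs => ?_) (le_iSup₂_of_le [] Language.nil_mem_one le_rfl)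
  rw [Language.mem_one] at hs; subst hs; exact le_rfl

lemma ereal_biSup_add_biSup_le {ι : Type*} {X Y : ι → EReal} {p q : ι → Prop} {c : EReal}
    (h : ∀ a, p a → ∀ b, q b → X a + Y b ≤ c) :
    (⨆ a, ⨆ _ : p a, X a) + (⨆ b, ⨆ _ : q b, Y b) ≤ c := by
  rw [ereal_iSup_add]
  refine iSup_le fun a => ?_
  rw [ereal_iSup_add]
  refine iSup_le fun ha => ?_
  rw [ereal_add_iSup]
  refine iSup_le fun b => ?_
  rw [ereal_add_iSup]
  exact iSup_le fun hb => h a ha b hb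

lemma langMat_mul (f : α → MPMat n) (L1 L2 : Language α) :
    langMat f (L1 * L2) = mpMul (langMat f L1) (langMat f L2) := by
  funext i j
  refine le_antisymm (iSup₂_le fun u hu => ?_) (iSup_le fun k => ?_)
  · obtain ⟨a, ha, b, hb, rfl⟩ := Language.mem_mul.mp hu
    rw [wordMat_append]
    refine iSup_le fun k => ?_
    have h1 : wordMat f a i k ≤ langMat f L1 i k := le_iSup₂_of_le a ha le_rfl
    have h2 : wordMat f b k j ≤ langMat f L2 k j := le_iSup₂_of_le b hb le_rfl
    exact le_trans (add_le_add h1 h2)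
      (le_iSup (fun k => langMat f L1 i k + langMat f L2 k j) k)
  · exact ereal_biSup_add_biSup_le fun a ha b hb =>
      le_iSup₂_of_le (a ++ b) (Language.mem_mul.mpr ⟨a, ha, b, hb, rfl⟩)
        (by rw [wordMat_append]
            exact le_iSup (fun k => wordMat f a i k + wordMat f b k j) k)

lemma mpPow_lang (f : α → MPMat n) (M : Language α) (k : ℕ) :
    mpPow (langMat f M) k = langMat f (M ^ k) := by
  induction k with
  | zero => rw [pow_zero, langMat_one]; rfl
  | succ k ih => show mpMul _ _ = _ ; rw [ih, ← langMat_mul, ← pow_succ']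

lemma inGamma_iff (f : α → MPMat n) (M : Language α) :
    InGamma (langMat f M) ↔ ∀ k, 1 ≤ k → ∀ s ∈ M ^ k, ∀ i, wordMat f s i i ≤ 0 := by
  constructor
  · intro h k hk s hs i
    have := h i k hk
    rw [mpPow_lang] at this
    exact le_trans (le_iSup₂_of_le s hs le_rfl) this
  · intro h i k hk
    rw [mpPow_lang]
    exact iSup₂_le fun s hs => h k hk s hs i


lemma fin_iSup_ne_top {g : Fin n → EReal} (h : ∀ k, g k ≠ ⊤) : (⨆ k, g k) ≠ ⊤ := by
  cases isEmpty_or_nonempty (Fin n) with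
  | inl hE => rw [iSup_of_empty]; exact bot_ne_top
  | inr hN =>
    obtain ⟨k0, hk0⟩ := Finite.exists_max g
    exact ne_top_of_le_ne_top (h k0) (iSup_le hk0)

lemma wordMat_ne_top {f : α → MPMat n} (hf : ∀ z i j, f z i j ≠ ⊤) :
    ∀ (s : List α) (i j : Fin n), wordMat f s i j ≠ ⊤ := by
  intro s
  induction s with
  | nil =>
    intro i j
    simp only [wordMat, mpId]
    split <;> simp
  | cons z s ih =>
    intro i j
    refine fin_iSup_ne_top fun k => ?_
    exact (EReal.add_lt_top (hf z i k) (ih k j)).ne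

lemma rotate_pos (f : α → MPMat n) (a b : List α) (i : Fin n)
    (h : 0 < wordMat f (a ++ b) i i) : ∃ j, 0 < wordMat f (b ++ a) j j := by
  rw [wordMat_append] at h
  obtain ⟨j, hj⟩ := lt_iSup_iff.mp h
  have h2 : wordMat f b j i + wordMat f a i j ≤ wordMat f (b ++ a) j j := by
    rw [wordMat_append]; exact mpMul_diag_le _ _ j i
  rw [add_comm] at hj
  exact ⟨j, lt_of_lt_of_le hj h2⟩

lemma kstar_append {L : Language α} {a b : List α} (ha : a ∈ KStar.kstar L) (hb : b ∈ KStar.kstar L) :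
    a ++ b ∈ KStar.kstar L := by
  obtain ⟨S, rfl, hS⟩ := Language.mem_kstar.mp ha
  obtain ⟨T, rfl, hT⟩ := Language.mem_kstar.mp hb
  rw [← List.flatten_append]
  exact Language.join_mem_kstar fun y hy => by
    rcases List.mem_append.mp hy with h | h
    · exact hS y h
    · exact hT y h

lemma head_true_mem (L : Language Bool) :
    ∀ ms : List (List Bool), (∀ u ∈ ms, u = [true] ∨ u ∈ L) →
    ∀ t : List Bool, t ∈ KStar.kstar L →
    ∃ m, 1 ≤ m ∧ [true] ++ (t ++ ms.flatten) ∈ (({[true]} : Language Bool) * KStar.kstar L) ^ m := by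
  intro ms
  induction ms with
  | nil =>
    intro _ t ht
    refine ⟨1, le_rfl, ?_⟩
    rw [pow_one]
    exact Language.mem_mul.mpr ⟨[true], rfl, t, ht, by simp⟩
  | cons u rest ih =>
    intro hmem t ht
    rcases hmem u List.mem_cons_self with hu | hu
    · subst hu
      obtain ⟨m, hm, hmm⟩ := ih (fun v hv => hmem v (List.mem_cons_of_mem _ hv)) [] (Language.nil_mem_kstar L)
      refine ⟨m + 1, le_add_self, ?_⟩
      rw [pow_succ']
      refine Language.mem_mul.mpr ⟨[true] ++ t, Language.mem_mul.mpr ⟨[true], rfl, t, ht, rfl⟩,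
        [true] ++ ([] ++ rest.flatten), hmm, ?_⟩
      simp [List.flatten_cons]
    · have hu' : u ∈ KStar.kstar L := Language.mem_kstar.mpr ⟨[u], by simp, by simpa using hu⟩
      obtain ⟨m, hm, hmm⟩ := ih (fun v hv => hmem v (List.mem_cons_of_mem _ hv)) (t ++ u)
        (kstar_append ht hu')
      refine ⟨m, hm, ?_⟩
      have he : [true] ++ ((t ++ u) ++ rest.flatten) = [true] ++ (t ++ (u :: rest).flatten) := by
        simp [List.flatten_cons, List.append_assoc]
      rwa [he] at hmm


lemma mem_B_single (L : Language Bool) {s : List Bool}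
    (hs : s ∈ ({[true]} : Language Bool) * KStar.kstar L) :
    ∃ m, 1 ≤ m ∧ s ∈ (({[true]} : Language Bool) + L) ^ m := by
  obtain ⟨a, ha, b, hb, rfl⟩ := Language.mem_mul.mp hs
  obtain ⟨S, rfl, hS⟩ := Language.mem_kstar.mp hb
  refine ⟨S.length + 1, Nat.le_add_left 1 S.length,
    Language.mem_pow.mpr ⟨a :: S, by simp [List.flatten_cons], by simp, ?_⟩⟩
  intro y hy
  rcases List.mem_cons.mp hy with rfl | h
  · exact (Language.mem_add _ _ y).mpr (Or.inl ha)
  · exact (Language.mem_add _ _ y).mpr (Or.inr (hS y h))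

lemma mem_Bpow_to_A (L : Language Bool) :
    ∀ k : ℕ, ∀ s : List Bool, s ∈ (({[true]} : Language Bool) * KStar.kstar L) ^ (k + 1) →
    ∃ m, 1 ≤ m ∧ s ∈ (({[true]} : Language Bool) + L) ^ m := by
  intro k
  induction k with
  | zero => intro s hs; rw [pow_one] at hs; exact mem_B_single L hs
  | succ k ih =>
    intro s hs
    rw [pow_succ'] at hs
    obtain ⟨a, ha, b, hb, rfl⟩ := Language.mem_mul.mp hs
    obtain ⟨m1, hm1, h1⟩ := mem_B_single L ha
    obtain ⟨m2, hm2, h2⟩ := ih b hb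
    exact ⟨m1 + m2, le_trans hm1 (Nat.le_add_right _ _),
      by rw [pow_add]; exact Language.mem_mul.mpr ⟨a, h1, b, h2, rfl⟩⟩

theorem stmt14' {n : ℕ} (P I : MPMat n)
    (hP : ∀ i j, P i j ≠ ⊤) (hI : ∀ i j, I i j ≠ ⊤)
    (hPd : ∀ j, P j j ≠ ⊥) (L : Language Bool) :
    InGamma (langMat (fun z => if z then P else I) (({[true]} : Language Bool) + L)) ↔
    InGamma (langMat (fun z => if z then P else I) (({[true]} : Language Bool) * KStar.kstar L)) := by
  rw [inGamma_iff, inGamma_iff]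
  constructor
  · intro H k hk s hs i
    obtain ⟨k', rfl⟩ : ∃ k', k = k' + 1 := ⟨k - 1, (Nat.succ_pred_eq_of_pos hk).symm⟩
    obtain ⟨m, hm, hsm⟩ := mem_Bpow_to_A L k' s hs
    exact H m hm s hsm i
  · intro H k hk s hs i
    by_contra hle
    push_neg at hle
    obtain ⟨S, rfl, hlen, hmem⟩ := Language.mem_pow.mp hs
    have hmem' : ∀ u ∈ S, u = [true] ∨ u ∈ L := fun u hu => by
      rcases (Language.mem_add _ _ u).mp (hmem u hu) with h | h
      · exact Or.inl h
      · exact Or.inr h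
    by_cases hall : ∀ u ∈ S, u ∈ L
    · have hfne : ∀ (z : Bool) (a b : Fin n), (if z then P else I) a b ≠ ⊤ := by
        intro z a b
        cases z with
        | false => simpa using hI a b
        | true => simpa using hP a b
      have htK : S.flatten ∈ KStar.kstar L := Language.join_mem_kstar hall
      set t := S.flatten with hts
      set W := wordMat (fun z : Bool => if z then P else I) with hW
      have hxtop : W t i i ≠ ⊤ := wordMat_ne_top hfne t i i
      have hxbot : W t i i ≠ ⊥ := (lt_of_le_of_lt bot_le hle).ne'
      set r := (W t i i).toReal with hrdef
      have hr : (r : EReal) = W t i i := EReal.coe_toReal hxtop hxbot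
      have hrpos : 0 < r := EReal.coe_pos.mp (by rw [hr]; exact hle)
      set q := (P i i).toReal with hqdef
      have hq : (q : EReal) = P i i := EReal.coe_toReal (hP i i) (hPd i)
      have hW1 : W [true] = P := by
        rw [hW]
        show mpMul (if True then P else I) (wordMat _ []) = P
        simp only [if_true]
        show mpMul P mpId = P
        exact mpMul_id P
      have hbound : ∀ N : ℕ, (↑((N : ℝ) * r) : EReal) ≤ W ((List.replicate N t).flatten) i i := by
        intro N
        induction N with
        | zero => simp [hW, wordMat, mpId]
        | succ N ih =>
          have he : (((N + 1 : ℕ) : ℝ) * r : ℝ) = r + (N : ℝ) * r := by push_cast; ring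
          rw [he, EReal.coe_add]
          calc (↑r : EReal) + ↑((N : ℝ) * r)
              ≤ W t i i + W ((List.replicate N t).flatten) i i := add_le_add (le_of_eq hr) ih
            _ ≤ W (t ++ (List.replicate N t).flatten) i i := wordMat_append_diag _ _ _ i
            _ = _ := by rw [List.replicate_succ, List.flatten_cons]
      have hrepl : ∀ N : ℕ, (List.replicate N t).flatten ∈ KStar.kstar L := by
        intro N
        induction N with
        | zero => simpa using Language.nil_mem_kstar L
        | succ N ih => rw [List.replicate_succ, List.flatten_cons]; exact kstar_append htK ih
      have hcon : ∀ N : ℕ, q + (N : ℝ) * r ≤ 0 := by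
        intro N
        have hmemB : [true] ++ (List.replicate N t).flatten ∈
            (({[true]} : Language Bool) * KStar.kstar L) ^ 1 := by
          rw [pow_one]; exact Language.mem_mul.mpr ⟨[true], rfl, _, hrepl N, rfl⟩
        have h0 := H 1 le_rfl _ hmemB i
        have h1 : (↑(q + (N : ℝ) * r) : EReal) ≤
            W ([true] ++ (List.replicate N t).flatten) i i := by
          rw [EReal.coe_add]
          refine le_trans (add_le_add ?_ (hbound N)) (wordMat_append_diag _ _ _ i)
          rw [← hW, hW1]; exact le_of_eq hq
        exact EReal.coe_nonpos.mp (le_trans h1 h0)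
      obtain ⟨N, hN⟩ := exists_nat_gt (-q / r)
      have hlt : -q < (N : ℝ) * r := by rwa [div_lt_iff₀ hrpos] at hN
      linarith [hcon N]
    · push_neg at hall
      obtain ⟨u, huS, huL⟩ := hall
      have hu : u = [true] := (hmem' u huS).resolve_right huL
      obtain ⟨xs, ys, rfl⟩ := List.append_of_mem huS
      subst hu
      have hsplit : (xs ++ [true] :: ys).flatten = xs.flatten ++ ([true] ++ ys.flatten) := by
        simp [List.flatten_append, List.flatten_cons]
      rw [hsplit] at hle
      obtain ⟨j, hj⟩ := rotate_pos _ _ _ i hle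
      have hA2 : ∀ v ∈ ys ++ xs, v = [true] ∨ v ∈ L := by
        intro v hv
        rcases List.mem_append.mp hv with h | h
        · exact hmem' v (by simp [h])
        · exact hmem' v (by simp [h])
      obtain ⟨m, hm, hmm⟩ := head_true_mem L (ys ++ xs) hA2 [] (Language.nil_mem_kstar L)
      have heq : [true] ++ ([] ++ (ys ++ xs).flatten) = ([true] ++ ys.flatten) ++ xs.flatten := by
        simp [List.flatten_append]
      rw [heq] at hmm
      exact absurd (H m hm _ hmm j) (not_le.mpr hj)


/-- if every diagonal entry of `P` is finite, then for any language
`L ⊆ {p, i}^*`, `G(μ({p} ∪ L)) ∈ Γ ↔ G(μ({p} · L^*)) ∈ Γ`. -/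
theorem stmt14 {n : ℕ} (P I : MPMat n)
    (hP : ∀ i j, P i j ≠ ⊤) (hI : ∀ i j, I i j ≠ ⊤)
    (hPd : ∀ j, P j j ≠ ⊥) (L : Language Bool) :
    InGamma (langMat (mu2 P I) (({[true]} : Language Bool) + L)) ↔
    InGamma (langMat (mu2 P I) (({[true]} : Language Bool) * KStar.kstar L)) := by
  exact stmt14' P I hP hI hPd L

end NCP
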